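/- Under the stated hypotheses, for all indices 1 ≤ i, j ≤ n−1 with |i−j| = 1, the mixed relations v_i σ_j v_i = v_j σ_i v_j and v_i τ_j v_i = v_j τ_i v_j hold in M. -/
import Mathlib


namespace VSBpaper

/-- `ascV v a b = v a * v (a+1) * ⋯ * v b` (equal to `1` when `b < a`). -/
def ascV {M : Type*} [Monoid M] (v : ℕ → M) (a b : ℕ) : M :=
  ((List.range' a (b + 1 - a)).map v).prod

/-- `descV v a b = v b * v (b-1) * ⋯ * v a` (equal to `1` when `b < a`). -/
def descV {M : Type*} [Monoid M] (v : ℕ → M) (a b : ℕ) : M :=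
  (((List.range' a (b + 1 - a)).map v).reverse).prod

private lemma ascV_succ {M : Type*} [Monoid M] (v : ℕ → M) (a b : ℕ) (h : a ≤ b + 1) :
    ascV v a (b + 1) = ascV v a b * v (b + 1) := by
  unfold ascV
  have h2 : b + 1 + 1 - a = (b + 1 - a) + 1 := by omega
  rw [h2, List.range'_concat]
  have : a + 1 * (b + 1 - a) = b + 1 := by omega
  rw [this]
  simp

private lemma descV_succ {M : Type*} [Monoid M] (v : ℕ → M) (a b : ℕ) (h : a ≤ b + 1) :
    descV v a (b + 1) = v (b + 1) * descV v a b := by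
  unfold descV
  have h2 : b + 1 + 1 - a = (b + 1 - a) + 1 := by omega
  rw [h2, List.range'_concat]
  have : a + 1 * (b + 1 - a) = b + 1 := by omega
  rw [this]
  simp

private lemma ascV_self {M : Type*} [Monoid M] (v : ℕ → M) (a : ℕ) : ascV v a a = v a := by
  unfold ascV
  simp

private lemma descV_self {M : Type*} [Monoid M] (v : ℕ → M) (a : ℕ) : descV v a a = v a := by
  unfold descV
  simp

private lemma commute_listprod {M : Type*} [Monoid M] (a : M) (l : List M)
    (h : ∀ x ∈ l, a * x = x * a) : a * l.prod = l.prod * a := by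
  induction l with
  | nil => simp
  | cons y t ih =>
    simp only [List.prod_cons, ← mul_assoc]
    rw [h y (by simp), mul_assoc, mul_assoc, ih fun x hx => h x (by simp [hx])]

private lemma commute_ascV {M : Type*} [Monoid M] (v : ℕ → M) (j a b : ℕ)
    (h : ∀ k, a ≤ k → k ≤ b → v j * v k = v k * v j) :
    v j * ascV v a b = ascV v a b * v j := by
  apply commute_listprod
  intro x hx
  simp only [List.mem_map, List.mem_range'_1] at hx
  obtain ⟨k, ⟨hk1, hk2⟩, rfl⟩ := hx
  exact h k hk1 (by omega)

private lemma commute_descV {M : Type*} [Monoid M] (v : ℕ → M) (j a b : ℕ)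
    (h : ∀ k, a ≤ k → k ≤ b → v j * v k = v k * v j) :
    v j * descV v a b = descV v a b * v j := by
  apply commute_listprod
  intro x hx
  simp only [List.mem_reverse, List.mem_map, List.mem_range'_1] at hx
  obtain ⟨k, ⟨hk1, hk2⟩, rfl⟩ := hx
  exact h k hk1 (by omega)



private lemma aux_rec {M : Type*} [Monoid M] (n : ℕ) (v : ℕ → M)
    (hvcomm : ∀ i j : ℕ, 1 ≤ i → i ≤ n - 1 → 1 ≤ j → j ≤ n - 1 → (i + 1 < j ∨ j + 1 < i) →
      v i * v j = v j * v i)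
    (hvsq : ∀ i : ℕ, 1 ≤ i → i ≤ n - 1 → v i * v i = 1)
    (x : M) (xs : ℕ → M) (hx1 : xs 1 = x)
    (hxdef : ∀ i : ℕ, 1 ≤ i → i ≤ n - 2 →
      xs (i + 1) = descV v 1 i * descV v 2 (i + 1) * x * ascV v 2 (i + 1) * ascV v 1 i) :
    ∀ i : ℕ, 1 ≤ i → i ≤ n - 2 →
      v i * xs (i + 1) * v i = v (i + 1) * xs i * v (i + 1) := by
  intro i hi1 hi2
  match i, hi1 with
  | 1, _ =>
    rw [hxdef 1 (by omega) (by omega), hx1]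
    rw [show descV v 1 1 = v 1 from descV_self v 1, show ascV v 1 1 = v 1 from ascV_self v 1,
      show descV v 2 (1+1) = v 2 from descV_self v 2, show ascV v 2 (1+1) = v 2 from ascV_self v 2,
      show (1:ℕ)+1 = 2 from rfl]
    have h1 : v 1 * v 1 = 1 := hvsq 1 (by omega) (by omega)
    simp only [mul_assoc]
    rw [h1, mul_one, ← mul_assoc, h1, one_mul]
  | (k+2), _ =>
    rw [hxdef (k+2) (by omega) (by omega), hxdef (k+1) (by omega) (by omega)]
    rw [show k+1+1 = k+2 from rfl, show k+2+1 = k+3 from rfl]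
    rw [descV_succ v 1 (k+1) (by omega), descV_succ v 2 (k+2) (by omega),
      ascV_succ v 2 (k+2) (by omega), ascV_succ v 1 (k+1) (by omega)]
    rw [show k+1+1 = k+2 from rfl, show k+2+1 = k+3 from rfl]
    have hsq : v (k+2) * v (k+2) = 1 := hvsq (k+2) (by omega) (by omega)
    have hcd : v (k+3) * descV v 1 (k+1) = descV v 1 (k+1) * v (k+3) :=
      commute_descV v (k+3) 1 (k+1) fun m hm1 hm2 =>
        hvcomm (k+3) m (by omega) (by omega) (by omega) (by omega) (by omega)
    have hca : ascV v 1 (k+1) * v (k+3) = v (k+3) * ascV v 1 (k+1) :=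
      (commute_ascV v (k+3) 1 (k+1) fun m hm1 hm2 =>
        hvcomm (k+3) m (by omega) (by omega) (by omega) (by omega) (by omega)).symm
    simp only [mul_assoc]
    rw [hsq, mul_one, ← mul_assoc (v (k+2)) (v (k+2)), hsq, one_mul,
      hca, ← mul_assoc (v (k+3)) (descV v 1 (k+1)), hcd, mul_assoc]

/-- **Lemma 4.8.** For all `1 ≤ i, j ≤ n-1` with `|i-j| = 1`, the mixed relations `v_i σ_j v_i = v_j σ_i v_j` and `v_i τ_j v_i = v_j τ_i v_j` hold in `M`. -/
theorem mixed_virtual_relations {M : Type*} [Monoid M] (n : ℕ) (hn : 2 ≤ n) (v : ℕ → M)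
    (hvbraid : ∀ i j : ℕ, 1 ≤ i → i ≤ n - 1 → 1 ≤ j → j ≤ n - 1 → (i + 1 = j ∨ j + 1 = i) →
      v i * v j * v i = v j * v i * v j)
    (hvcomm : ∀ i j : ℕ, 1 ≤ i → i ≤ n - 1 → 1 ≤ j → j ≤ n - 1 → (i + 1 < j ∨ j + 1 < i) →
      v i * v j = v j * v i)
    (hvsq : ∀ i : ℕ, 1 ≤ i → i ≤ n - 1 → v i * v i = 1)
    (σ σ' τ : M)
    (hcomm_στ : σ * τ = τ * σ)
    (hinv : σ * σ' = 1) (hinv' : σ' * σ = 1)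
    (hτv : ∀ i : ℕ, 3 ≤ i → i ≤ n - 1 → τ * v i = v i * τ)
    (hσv : ∀ i : ℕ, 3 ≤ i → i ≤ n - 1 → σ * v i = v i * σ)
    (hbraid_base : 2 ≤ n - 1 →
      σ * (v 1 * v 2 * σ * v 2 * v 1) * σ =
        (v 1 * v 2 * σ * v 2 * v 1) * σ * (v 1 * v 2 * σ * v 2 * v 1))
    (hmixed_base : 2 ≤ n - 1 →
      τ * (v 1 * v 2 * σ * v 2 * v 1) * σ =
        (v 1 * v 2 * σ * v 2 * v 1) * σ * (v 1 * v 2 * τ * v 2 * v 1))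
    (hfar_σσ : 3 ≤ n - 1 →
      σ * (v 2 * v 3 * v 1 * v 2 * σ * v 2 * v 1 * v 3 * v 2) =
        (v 2 * v 3 * v 1 * v 2 * σ * v 2 * v 1 * v 3 * v 2) * σ)
    (hfar_τσ : 3 ≤ n - 1 →
      τ * (v 2 * v 3 * v 1 * v 2 * σ * v 2 * v 1 * v 3 * v 2) =
        (v 2 * v 3 * v 1 * v 2 * σ * v 2 * v 1 * v 3 * v 2) * τ)
    (hfar_ττ : 3 ≤ n - 1 →
      τ * (v 2 * v 3 * v 1 * v 2 * τ * v 2 * v 1 * v 3 * v 2) =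
        (v 2 * v 3 * v 1 * v 2 * τ * v 2 * v 1 * v 3 * v 2) * τ)
    (σs σs' τs : ℕ → M)
    (hσ1 : σs 1 = σ) (hσ'1 : σs' 1 = σ') (hτ1 : τs 1 = τ)
    (hσdef : ∀ i : ℕ, 1 ≤ i → i ≤ n - 2 →
      σs (i + 1) = descV v 1 i * descV v 2 (i + 1) * σ * ascV v 2 (i + 1) * ascV v 1 i)
    (hσ'def : ∀ i : ℕ, 1 ≤ i → i ≤ n - 2 →
      σs' (i + 1) = descV v 1 i * descV v 2 (i + 1) * σ' * ascV v 2 (i + 1) * ascV v 1 i)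
    (hτdef : ∀ i : ℕ, 1 ≤ i → i ≤ n - 2 →
      τs (i + 1) = descV v 1 i * descV v 2 (i + 1) * τ * ascV v 2 (i + 1) * ascV v 1 i) :
    ∀ i j : ℕ, 1 ≤ i → i ≤ n - 1 → 1 ≤ j → j ≤ n - 1 → (i + 1 = j ∨ j + 1 = i) →
      v i * σs j * v i = v j * σs i * v j ∧ v i * τs j * v i = v j * τs i * v j := by
  intro i j hi1 hin hj1 hjn hadj
  rcases hadj with h | h
  · subst h
    exact ⟨aux_rec n v hvcomm hvsq σ σs hσ1 hσdef i hi1 (by omega),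
      aux_rec n v hvcomm hvsq τ τs hτ1 hτdef i hi1 (by omega)⟩
  · subst h
    exact ⟨(aux_rec n v hvcomm hvsq σ σs hσ1 hσdef j hj1 (by omega)).symm,
      (aux_rec n v hvcomm hvsq τ τs hτ1 hτdef j hj1 (by omega)).symm⟩


end VSBpaper
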